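/- Let A be a Banach algebra over ℂ and x ∈ A an element such that the smallest closed subalgebra of A containing x is all of A. Let D : A × A → ℂ be a continuous bilinear form satisfying the Leibniz identity D(a*b, c) = D(a, b*c) + D(b, c*a) for all a, b, c ∈ A and the antisymmetry D(a, b) = −D(b, a) for all a, b ∈ A. Then D = 0. (In other words, every singly generated Banach algebra is cyclically amenable.) -/
import Mathlib

/-- Positive powers in a non-unital ring: `pw x n = x ^ (n+1)`. -/
private def pw {A : Type*} [NonUnitalNormedRing A] (x : A) : ℕ → A
  | 0 => x
  | n + 1 => x * pw x n

private lemma pw_add {A : Type*} [NonUnitalNormedRing A] (x : A) (m n : ℕ) :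
    pw x (m + n + 1) = pw x m * pw x n := by
  induction m with
  | zero => simp [pw]
  | succ m ih =>
    have : m + 1 + n + 1 = (m + n + 1) + 1 := by ring
    rw [this, pw, ih, pw, mul_assoc]

/-- **Singly generated Banach algebras are cyclically amenable** (Remark 2.2 of
Choi–Ghandehari): if `A` is a Banach algebra over `ℂ` topologically generated by a
single element `x` (i.e. the smallest closed subalgebra containing `x`, namely the
closure of the non-unital subalgebra generated by `x`, is all of `A`), then every
continuous cyclic derivation on `A` — i.e. every continuous bilinear form
`D : A × A → ℂ` satisfying the Leibniz identity `D(ab, c) = D(a, bc) + D(b, ca)`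
and the antisymmetry `D(a,b) = -D(b,a)` — is zero. -/
theorem singly_generated_cyclically_amenable
    {A : Type*} [NonUnitalNormedRing A] [NormedSpace ℂ A]
    [IsScalarTower ℂ A A] [SMulCommClass ℂ A A] [CompleteSpace A]
    (x : A)
    (hx : Dense ((NonUnitalAlgebra.adjoin ℂ {x} : NonUnitalSubalgebra ℂ A) : Set A))
    (D : A →L[ℂ] A →L[ℂ] ℂ)
    (hleib : ∀ a b c : A, D (a * b) c = D a (b * c) + D b (c * a))
    (hanti : ∀ a b : A, D a b = -D b a) :
    D = 0 := by
  -- Key: D(x^(m+1), x^(n+1)) = (m+1) * D(x, x^(m+n+1))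
  have key : ∀ m n : ℕ, D (pw x m) (pw x n) = (m + 1 : ℂ) * D x (pw x (m + n)) := by
    intro m
    induction m with
    | zero => intro n; simp [pw]
    | succ m ih =>
      intro n
      have e1 : pw x m * pw x n = pw x (m + n + 1) := (pw_add x m n).symm
      have e2 : pw x n * x = pw x (n + 1) := by
        have h := pw_add x n 0
        rw [Nat.add_zero] at h
        exact h.symm
      rw [pw, hleib, e1, e2, ih (n + 1)]
      have h4 : m + (n + 1) = m + n + 1 := by ring
      have h5 : m + 1 + n = m + n + 1 := by ring
      rw [h4, h5]
      push_cast
      ring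
  -- Hence D vanishes on positive powers of x
  have hpow : ∀ m n : ℕ, D (pw x m) (pw x n) = 0 := by
    intro m n
    have h1 := key m n
    have h2 := key n m
    have h3 : n + m = m + n := by ring
    rw [h3] at h2
    have h4 := hanti (pw x m) (pw x n)
    rw [h1, h2] at h4
    have h5 : ((m : ℂ) + 1 + ((n : ℂ) + 1)) * D x (pw x (m + n)) = 0 := by
      rw [add_mul]; linear_combination h4
    have h6 : ((m : ℂ) + 1 + ((n : ℂ) + 1)) ≠ 0 := by
      intro h
      have := congrArg Complex.re h
      simp [Complex.natCast_re] at this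
      have hm : (0:ℝ) ≤ (m : ℝ) := Nat.cast_nonneg m
      have hn : (0:ℝ) ≤ (n : ℝ) := Nat.cast_nonneg n
      linarith
    rcases mul_eq_zero.mp h5 with h | h
    · exact absurd h h6
    · rw [h1, h, mul_zero]
  -- every element of the subsemigroup closure of {x} is a positive power of x
  have hsg : ∀ a ∈ Subsemigroup.closure ({x} : Set A), ∃ n : ℕ, a = pw x n := by
    intro a ha
    induction ha using Subsemigroup.closure_induction with
    | mem y hy => exact ⟨0, by simp [Set.mem_singleton_iff.mp hy, pw]⟩
    | mul y z _ _ hy hz =>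
      obtain ⟨i, rfl⟩ := hy
      obtain ⟨j, rfl⟩ := hz
      exact ⟨i + j + 1, (pw_add x i j).symm⟩
  -- D vanishes on the closure pairs
  have hS : ∀ a ∈ Subsemigroup.closure ({x} : Set A),
      ∀ b ∈ Subsemigroup.closure ({x} : Set A), D a b = 0 := by
    intro a ha b hb
    obtain ⟨m, rfl⟩ := hsg a ha
    obtain ⟨n, rfl⟩ := hsg b hb
    exact hpow m n
  -- D vanishes on the non-unital subalgebra generated by x
  have hspan : ∀ a ∈ (NonUnitalAlgebra.adjoin ℂ {x} : NonUnitalSubalgebra ℂ A),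
      ∀ b ∈ (NonUnitalAlgebra.adjoin ℂ {x} : NonUnitalSubalgebra ℂ A), D a b = 0 := by
    have hmem : ∀ a : A, a ∈ (NonUnitalAlgebra.adjoin ℂ {x} : NonUnitalSubalgebra ℂ A) →
        a ∈ Submodule.span ℂ (Subsemigroup.closure ({x} : Set A) : Set A) := by
      intro a ha
      have := NonUnitalAlgebra.adjoin_eq_span (R := ℂ) ({x} : Set A)
      rw [← this]
      exact ha
    intro a ha b hb
    replace ha := hmem a ha
    replace hb := hmem b hb
    have hleft : ∀ c ∈ Subsemigroup.closure ({x} : Set A), D a c = 0 := by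
      intro c hc
      have : a ∈ LinearMap.ker ((D.flip c : A →L[ℂ] ℂ) : A →ₗ[ℂ] ℂ) := by
        refine Submodule.span_le.mpr ?_ ha
        intro y hy
        exact hS y hy c hc
      simpa using this
    have : b ∈ LinearMap.ker ((D a : A →L[ℂ] ℂ) : A →ₗ[ℂ] ℂ) := by
      refine Submodule.span_le.mpr ?_ hb
      intro y hy
      exact hleft y hy
    simpa using this
  -- now use density and continuity
  have step1 : ∀ b ∈ (NonUnitalAlgebra.adjoin ℂ {x} : NonUnitalSubalgebra ℂ A),
      ∀ a : A, D a b = 0 := by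
    intro b hb a
    have : (fun a => D a b) = (fun _ => (0 : ℂ)) := by
      refine Continuous.ext_on hx (D.flip b).continuous continuous_const ?_
      intro y hy
      exact hspan y hy b hb
    exact congrFun this a
  have step2 : ∀ a b : A, D a b = 0 := by
    intro a
    have : (fun b => D a b) = (fun _ => (0 : ℂ)) := by
      refine Continuous.ext_on hx (D a).continuous continuous_const ?_
      intro y hy
      exact step1 y hy a
    intro b; exact congrFun this b
  ext a b
  simp [step2 a b]
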